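/- arXiv:1807.03279 — 6 statements merged into one kernel-verified Lean document; each statement's English description precedes it below -/
import Mathlib

section
/- Let S : (ℝ³)^N → (ℝ³)^N be the discrete regularized-Stokeslet operator S(x)_k = Σ_{j=1}^N h² U(x_k − x_j)(F(x)_j). Assume the kernel is even, U(−r) = U(r) for all r ∈ ℝ³, and that each U(r) is a symmetric (self-adjoint) linear map on ℝ³. Then for all x, y, φ ∈ (ℝ³)^N (with all quantities evaluated at a point x where F is differentiable), the Fréchet derivative DS(x) satisfies the adjoint identity ⟨DS(x)(y), φ⟩ = ⟨y, Φ⟩, where for each k, Φ_k = Σ_{j=1}^N h² g_{kj} + (DF(x)*(ψ))_k, the vector g_{kj} ∈ ℝ³ is the unique vector satisfying ⟨g_{kj}, v⟩ = ⟨(DU(x_k − x_j)(v))(F(x)_j), φ_k⟩ + ⟨(DU(x_k − x_j)(v))(F(x)_k), φ_j⟩ for all v ∈ ℝ³, ψ_j = Σ_{i=1}^N h² U(x_j − x_i)(φ_i), and DF(x)* denotes the adjoint of DF(x) with respect to ⟨·,·⟩. -/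
open scoped RealInnerProductSpace

noncomputable section

set_option maxHeartbeats 1000000

local notation "E3" => EuclideanSpace ℝ (Fin 3)

/-- Adjoint identity for the Fréchet derivative of the discrete
regularized-Stokeslet operator `S(x)_k = ∑_j h² U(x_k − x_j)(F(x)_j)`.
Assuming the kernel is even (`U(−r) = U(r)`) and each `U(r)` is self-adjoint on ℝ³, we have
`⟨DS(x)(y), φ⟩ = ⟨y, Φ⟩` where
`Φ_k = ∑_j h² g_kj + (DF(x)*(ψ))_k`,
`⟨g_kj, v⟩ = ⟨(DU(x_k−x_j)(v))(F(x)_j), φ_k⟩ + ⟨(DU(x_k−x_j)(v))(F(x)_k), φ_j⟩`,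
`ψ_j = ∑_i h² U(x_j − x_i)(φ_i)`, and `DF(x)*` is the adjoint of `DF(x)` w.r.t. `⟨·,·⟩`. -/
theorem stokeslet_fderiv_adjoint_identity
    (N : ℕ) (h : ℝ) (hh : 0 < h)
    (U : EuclideanSpace ℝ (Fin 3) →
      (EuclideanSpace ℝ (Fin 3) →L[ℝ] EuclideanSpace ℝ (Fin 3)))
    (hU : ContDiff ℝ 1 U)
    (hUeven : ∀ r, U (-r) = U r)
    (hUsymm : ∀ r v w, ⟪U r v, w⟫ = ⟪v, U r w⟫)
    (F : (Fin N → EuclideanSpace ℝ (Fin 3)) → (Fin N → EuclideanSpace ℝ (Fin 3)))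
    (hF : ContDiff ℝ 1 F)
    (S : (Fin N → EuclideanSpace ℝ (Fin 3)) → (Fin N → EuclideanSpace ℝ (Fin 3)))
    (hS : ∀ x k, S x k = ∑ j, h ^ 2 • (U (x k - x j)) (F x j))
    (x y φ : Fin N → EuclideanSpace ℝ (Fin 3))
    -- `Fadj` is the adjoint of `DF(x)` with respect to the inner product
    -- `⟨u, v⟩ = ∑ k ⟨u k, v k⟩` on `(ℝ³)^N`:
    (Fadj : (Fin N → EuclideanSpace ℝ (Fin 3)) →L[ℝ] (Fin N → EuclideanSpace ℝ (Fin 3)))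
    (hFadj : ∀ u v, (∑ k, ⟪(fderiv ℝ F x) u k, v k⟫) = ∑ k, ⟪u k, Fadj v k⟫)
    -- `g k j` is the (unique) vector representing the stated functional:
    (g : Fin N → Fin N → EuclideanSpace ℝ (Fin 3))
    (hg : ∀ k j v, ⟪g k j, v⟫ =
        ⟪(fderiv ℝ U (x k - x j) v) (F x j), φ k⟫
        + ⟪(fderiv ℝ U (x k - x j) v) (F x k), φ j⟫)
    (ψ : Fin N → EuclideanSpace ℝ (Fin 3))
    (hψ : ∀ j, ψ j = ∑ i, h ^ 2 • (U (x j - x i)) (φ i))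
    (Φ : Fin N → EuclideanSpace ℝ (Fin 3))
    (hΦ : ∀ k, Φ k = (∑ j, h ^ 2 • g k j) + Fadj ψ k) :
    (∑ k, ⟪fderiv ℝ S x y k, φ k⟫) = ∑ k, ⟪y k, Φ k⟫ := by
  classical
  have hFd : HasFDerivAt F (fderiv ℝ F x) x :=
    ((hF.differentiable one_ne_zero) x).hasFDerivAt
  have hUd : ∀ r, HasFDerivAt U (fderiv ℝ U r) r := fun r =>
    ((hU.differentiable one_ne_zero) r).hasFDerivAt
  -- Evenness of U implies oddness of its derivative
  have hDUneg : ∀ r v, fderiv ℝ U (-r) v = -(fderiv ℝ U r v) := by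
    intro r v
    have h1 : HasFDerivAt (fun s : E3 => U (-s))
        ((fderiv ℝ U (-r)).comp (-(ContinuousLinearMap.id ℝ E3))) r :=
      (hUd (-r)).comp r ((hasFDerivAt_id r).neg)
    have h2 : (fun s : E3 => U (-s)) = U := funext hUeven
    rw [h2] at h1
    have h3 : fderiv ℝ U r = (fderiv ℝ U (-r)).comp (-(ContinuousLinearMap.id ℝ E3)) :=
      h1.fderiv
    have h4 : fderiv ℝ U r (-v) = fderiv ℝ U (-r) v := by
      rw [h3]; simp
    rw [← h4, map_neg]
  -- Explicit formula for the derivative of S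
  set P : Fin N → ((Fin N → E3) →L[ℝ] E3) := fun k => ContinuousLinearMap.proj k with hP
  set L : (Fin N → E3) →L[ℝ] (Fin N → E3) := ContinuousLinearMap.pi (fun k =>
    ∑ j, h ^ 2 • ((U (x k - x j)).comp ((P j).comp (fderiv ℝ F x))
      + ((fderiv ℝ U (x k - x j)).comp (P k - P j)).flip (F x j))) with hL
  have hSL : HasFDerivAt S L x := by
    have hS' : S = fun x' k => ∑ j, h ^ 2 • (U (x' k - x' j)) (F x' j) :=
      funext fun x' => funext fun k => hS x' k
    rw [hS', hL]
    apply hasFDerivAt_pi''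
    intro k
    rw [show ContinuousLinearMap.comp (ContinuousLinearMap.proj k)
        (ContinuousLinearMap.pi (fun k =>
          ∑ j, h ^ 2 • ((U (x k - x j)).comp ((P j).comp (fderiv ℝ F x))
            + ((fderiv ℝ U (x k - x j)).comp (P k - P j)).flip (F x j))))
      = ∑ j, h ^ 2 • ((U (x k - x j)).comp ((P j).comp (fderiv ℝ F x))
            + ((fderiv ℝ U (x k - x j)).comp (P k - P j)).flip (F x j)) from by
        ext v; simp]
    apply HasFDerivAt.fun_sum
    intro j _
    apply HasFDerivAt.fun_const_smul
    have hc : HasFDerivAt (fun x' : Fin N → E3 => U (x' k - x' j))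
        ((fderiv ℝ U (x k - x j)).comp (P k - P j)) x :=
      (hUd (x k - x j)).comp x (((P k).hasFDerivAt).sub ((P j).hasFDerivAt))
    have hu : HasFDerivAt (fun x' : Fin N → E3 => F x' j)
        ((P j).comp (fderiv ℝ F x)) x := ((P j).hasFDerivAt).comp x hFd
    exact hc.clm_apply hu
  have key : ∀ k, fderiv ℝ S x y k = ∑ j, h ^ 2 •
      ((U (x k - x j)) (fderiv ℝ F x y j)
        + (fderiv ℝ U (x k - x j) (y k - y j)) (F x j)) := by
    intro k
    rw [hSL.fderiv, hL]
    simp [ContinuousLinearMap.pi_apply, ContinuousLinearMap.sum_apply, hP]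
  -- kernel symmetry under even swap
  have hUswap : ∀ k j : Fin N, U (x k - x j) = U (x j - x k) := fun k j => by
    rw [← hUeven (x j - x k), neg_sub]
  -- expand the left-hand side termwise
  have expand : ∀ k, ⟪fderiv ℝ S x y k, φ k⟫ =
      ∑ j, (h ^ 2 * ⟪fderiv ℝ F x y j, U (x j - x k) (φ k)⟫
        + (h ^ 2 * ⟪(fderiv ℝ U (x k - x j) (y k)) (F x j), φ k⟫
          - h ^ 2 * ⟪(fderiv ℝ U (x k - x j) (y j)) (F x j), φ k⟫)) := by
    intro k
    rw [key k, sum_inner]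
    refine Finset.sum_congr rfl fun j _ => ?_
    rw [real_inner_smul_left, inner_add_left, hUswap k j, hUsymm,
      map_sub, ContinuousLinearMap.sub_apply, inner_sub_left]
    ring
  rw [Finset.sum_congr rfl fun k _ => expand k]
  rw [Finset.sum_congr rfl fun k _ => (Finset.sum_add_distrib :
    (∑ j, _) = _)]
  rw [Finset.sum_add_distrib]
  -- Part A: the F-derivative part gives the adjoint term via ψ
  have partA : (∑ k, ∑ j, h ^ 2 * ⟪fderiv ℝ F x y j, U (x j - x k) (φ k)⟫)
      = ∑ k, ⟪y k, Fadj ψ k⟫ := by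
    rw [Finset.sum_comm, ← hFadj y ψ]
    refine Finset.sum_congr rfl fun j _ => ?_
    rw [hψ j, inner_sum]
    refine Finset.sum_congr rfl fun i _ => ?_
    rw [real_inner_smul_right]
  -- Part B: the kernel-derivative part gives the g-term
  have partB : (∑ k, ∑ j, (h ^ 2 * ⟪(fderiv ℝ U (x k - x j) (y k)) (F x j), φ k⟫
          - h ^ 2 * ⟪(fderiv ℝ U (x k - x j) (y j)) (F x j), φ k⟫))
      = ∑ k, ⟪y k, ∑ j, h ^ 2 • g k j⟫ := by
    have swap : (∑ k, ∑ j, h ^ 2 * ⟪(fderiv ℝ U (x k - x j) (y j)) (F x j), φ k⟫)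
        = ∑ k, ∑ j, -(h ^ 2 * ⟪(fderiv ℝ U (x k - x j) (y k)) (F x k), φ j⟫) := by
      rw [Finset.sum_comm]
      refine Finset.sum_congr rfl fun k _ => Finset.sum_congr rfl fun j _ => ?_
      have : fderiv ℝ U (x j - x k) (y k) = -(fderiv ℝ U (x k - x j) (y k)) := by
        rw [← neg_sub (x k) (x j), hDUneg]
      rw [this, ContinuousLinearMap.neg_apply, inner_neg_left]
      ring
    rw [Finset.sum_congr rfl fun k _ => (Finset.sum_sub_distrib _ _ :
      (∑ j, _) = _), Finset.sum_sub_distrib, swap]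
    simp only [Finset.sum_neg_distrib, sub_neg_eq_add, ← Finset.sum_add_distrib]
    refine Finset.sum_congr rfl fun k _ => ?_
    rw [inner_sum]
    refine Finset.sum_congr rfl fun j _ => ?_
    rw [real_inner_smul_right, real_inner_comm (g k j) (y k), hg, mul_add]
  rw [partA, partB, ← Finset.sum_add_distrib]
  refine Finset.sum_congr rfl fun k _ => ?_
  rw [hΦ k, inner_add_right]
  ring
end
end

section
/- Suppose the modified Galerkin orthogonality holds: ∫₀ᵀ ⟨Ẋ(t), πz(t)⟩ dt = Σ_{ℓ=1}^L b_ℓ Q_ℓ. Then the residual pairing decomposes exactly as ∫₀ᵀ ⟨Ẋ(t) − f(t), z(t)⟩ dt = E_R + E_E + E_Q, where E_R = ∫₀ᵀ ⟨Ẋ(t) − Σ_{ℓ=1}^L b_ℓ G_ℓ(t), z(t) − πz(t)⟩ dt (the residual error), E_E = ∫₀ᵀ ⟨Σ_{ℓ=1}^L b_ℓ G_ℓ(t) − f(t), z(t)⟩ dt (the explicit/extrapolation error), and E_Q = Σ_{ℓ=1}^L b_ℓ ( Q_ℓ − ∫₀ᵀ ⟨G_ℓ(t), πz(t)⟩ dt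 ) (the quadrature error). -/
open scoped RealInnerProductSpace

noncomputable section

/-- Under the modified Galerkin orthogonality
`∫₀ᵀ ⟨Ẋ, πz⟩ = ∑_ℓ b_ℓ Q_ℓ`, the residual pairing decomposes exactly as
`∫₀ᵀ ⟨Ẋ − f, z⟩ = E_R + E_E + E_Q` with
`E_R = ∫₀ᵀ ⟨Ẋ − ∑_ℓ b_ℓ G_ℓ, z − πz⟩`,
`E_E = ∫₀ᵀ ⟨∑_ℓ b_ℓ G_ℓ − f, z⟩`,
`E_Q = ∑_ℓ b_ℓ (Q_ℓ − ∫₀ᵀ ⟨G_ℓ, πz⟩)`. -/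
theorem residual_error_decomposition
    (n L Qn : ℕ) (T : ℝ) (hT : 0 < T)
    (X X' f : ℝ → EuclideanSpace ℝ (Fin n))
    (G : Fin L → ℝ → EuclideanSpace ℝ (Fin n))
    (b : Fin L → ℝ)
    (z πz : ℝ → EuclideanSpace ℝ (Fin n))
    (hX : ∀ t ∈ Set.Icc (0 : ℝ) T, HasDerivAt X (X' t) t)
    (hX' : ContinuousOn X' (Set.Icc 0 T))
    (hf : ContinuousOn f (Set.Icc 0 T))
    (hG : ∀ ℓ, ContinuousOn (G ℓ) (Set.Icc 0 T))
    (hz : ContinuousOn z (Set.Icc 0 T))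
    (hπz : ContinuousOn πz (Set.Icc 0 T))
    -- quadrature weights and nodes
    (w : Fin L → Fin Qn → ℝ) (tq : Fin L → Fin Qn → ℝ)
    (htq : ∀ ℓ q, tq ℓ q ∈ Set.Icc (0 : ℝ) T)
    (Q : Fin L → ℝ)
    (hQ : ∀ ℓ, Q ℓ = ∑ q, w ℓ q * ⟪G ℓ (tq ℓ q), πz (tq ℓ q)⟫)
    -- modified Galerkin orthogonality
    (hGal : (∫ t in (0 : ℝ)..T, ⟪X' t, πz t⟫) = ∑ ℓ, b ℓ * Q ℓ) :
    (∫ t in (0 : ℝ)..T, ⟪X' t - f t, z t⟫) =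
      (∫ t in (0 : ℝ)..T, ⟪X' t - ∑ ℓ, b ℓ • G ℓ t, z t - πz t⟫)
      + (∫ t in (0 : ℝ)..T, ⟪(∑ ℓ, b ℓ • G ℓ t) - f t, z t⟫)
      + ∑ ℓ, b ℓ * (Q ℓ - ∫ t in (0 : ℝ)..T, ⟪G ℓ t, πz t⟫) := by
  have hIcc : Set.uIcc (0:ℝ) T = Set.Icc 0 T := Set.uIcc_of_le hT.le
  set S : ℝ → EuclideanSpace ℝ (Fin n) := fun t => ∑ ℓ, b ℓ • G ℓ t with hS
  have hScont : ContinuousOn S (Set.Icc 0 T) := by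
    apply continuousOn_finset_sum
    intro ℓ _
    exact (hG ℓ).const_smul (b ℓ)
  have inte : ∀ (g h : ℝ → EuclideanSpace ℝ (Fin n)),
      ContinuousOn g (Set.Icc 0 T) → ContinuousOn h (Set.Icc 0 T) →
      IntervalIntegrable (fun t => ⟪g t, h t⟫) MeasureTheory.volume 0 T := by
    intro g h hg hh
    apply ContinuousOn.intervalIntegrable
    rw [hIcc]
    exact ContinuousOn.inner hg hh
  have i1 : IntervalIntegrable (fun t => ⟪X' t - S t, z t - πz t⟫) MeasureTheory.volume 0 T :=
    inte _ _ (hX'.sub hScont) (hz.sub hπz)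
  have i2 : IntervalIntegrable (fun t => ⟪S t - f t, z t⟫) MeasureTheory.volume 0 T :=
    inte _ _ (hScont.sub hf) hz
  have i3 := inte _ _ hX' hπz
  have i4 := inte _ _ hScont hπz
  have iG : ∀ ℓ : Fin L, IntervalIntegrable (fun t => ⟪G ℓ t, πz t⟫)
      MeasureTheory.volume 0 T := fun ℓ => inte _ _ (hG ℓ) hπz
  have hSip : (∫ t in (0:ℝ)..T, ⟪S t, πz t⟫) = ∑ ℓ, b ℓ * ∫ t in (0:ℝ)..T, ⟪G ℓ t, πz t⟫ := by
    have : ∀ t, ⟪S t, πz t⟫ = ∑ ℓ, b ℓ * ⟪G ℓ t, πz t⟫ := by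
      intro t
      simp [hS, sum_inner, real_inner_smul_left, Finset.mul_sum, mul_assoc]
    rw [intervalIntegral.integral_congr (fun t _ => this t),
      intervalIntegral.integral_finset_sum]
    · simp_rw [intervalIntegral.integral_const_mul]
    · intro ℓ _
      exact (iG ℓ).const_mul (b ℓ)
  have key : ∀ t : ℝ, ⟪X' t - f t, z t⟫ =
      ⟪X' t - S t, z t - πz t⟫ + ⟪S t - f t, z t⟫ + (⟪X' t, πz t⟫ - ⟪S t, πz t⟫) := by
    intro t
    simp only [inner_sub_left, inner_sub_right]
    ring
  calc (∫ t in (0:ℝ)..T, ⟪X' t - f t, z t⟫)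
      = ∫ t in (0:ℝ)..T, (⟪X' t - S t, z t - πz t⟫ + ⟪S t - f t, z t⟫
          + (⟪X' t, πz t⟫ - ⟪S t, πz t⟫)) :=
        intervalIntegral.integral_congr (fun t _ => key t)
    _ = (∫ t in (0:ℝ)..T, ⟪X' t - S t, z t - πz t⟫)
          + (∫ t in (0:ℝ)..T, ⟪S t - f t, z t⟫)
          + ((∫ t in (0:ℝ)..T, ⟪X' t, πz t⟫) - ∫ t in (0:ℝ)..T, ⟪S t, πz t⟫) := by
        rw [intervalIntegral.integral_add (i1.add i2) (i3.sub i4),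
          intervalIntegral.integral_add i1 i2, intervalIntegral.integral_sub i3 i4]
    _ = (∫ t in (0:ℝ)..T, ⟪X' t - S t, z t - πz t⟫)
          + (∫ t in (0:ℝ)..T, ⟪S t - f t, z t⟫)
          + ∑ ℓ, b ℓ * (Q ℓ - ∫ t in (0:ℝ)..T, ⟪G ℓ t, πz t⟫) := by
        rw [hGal, hSip]
        simp [Finset.sum_sub_distrib, mul_sub]
end
end

section
/- Suppose the modified Galerkin orthogonality holds: ∫₀ᵀ ⟨Ẋ(t), πz(t)⟩ dt = Σ_{ℓ=1}^L b_ℓ Q_ℓ. Then the residual pairing with respect to the unregularized operator decomposes exactly as ∫₀ᵀ ⟨Ẋ(t) − g₀(t), z(t)⟩ dt = E_R + E_E + E_Q + E_Re, where E_R = ∫₀ᵀ ⟨Ẋ(t) − Σ_{ℓ=1}^L b_ℓ G_ℓ(t), z(t) − πz(t)⟩ dt, E_E = ∫₀ᵀ ⟨Σ_{ℓ=1}^L b_ℓ G_ℓ(t) − f(t), z(t)⟩ dt, E_Q = Σ_{ℓ=1}^L b_ℓ ( Q_ℓ − ∫₀ᵀ ⟨G_ℓ(t), πz(t)⟩ dt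 ), and E_Re = ∫₀ᵀ ⟨f(t) − g₀(t), z(t)⟩ dt (the regularization error). -/
open scoped RealInnerProductSpace

noncomputable section

/-- Under the modified Galerkin orthogonality
`∫₀ᵀ ⟨Ẋ, πz⟩ = ∑_ℓ b_ℓ Q_ℓ`, the residual pairing with respect to the unregularized
operator decomposes exactly as
`∫₀ᵀ ⟨Ẋ − g₀, z⟩ = E_R + E_E + E_Q + E_Re` with
`E_R = ∫₀ᵀ ⟨Ẋ − ∑_ℓ b_ℓ G_ℓ, z − πz⟩`,
`E_E = ∫₀ᵀ ⟨∑_ℓ b_ℓ G_ℓ − f, z⟩`,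
`E_Q = ∑_ℓ b_ℓ (Q_ℓ − ∫₀ᵀ ⟨G_ℓ, πz⟩)`,
`E_Re = ∫₀ᵀ ⟨f − g₀, z⟩` (the regularization error). -/
theorem residual_error_decomposition_with_regularization
    (n L Qn : ℕ) (T : ℝ) (hT : 0 < T)
    (X X' f g₀ : ℝ → EuclideanSpace ℝ (Fin n))
    (G : Fin L → ℝ → EuclideanSpace ℝ (Fin n))
    (b : Fin L → ℝ)
    (z πz : ℝ → EuclideanSpace ℝ (Fin n))
    (hX : ∀ t ∈ Set.Icc (0 : ℝ) T, HasDerivAt X (X' t) t)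
    (hX' : ContinuousOn X' (Set.Icc 0 T))
    (hf : ContinuousOn f (Set.Icc 0 T))
    (hg₀ : ContinuousOn g₀ (Set.Icc 0 T))
    (hG : ∀ ℓ, ContinuousOn (G ℓ) (Set.Icc 0 T))
    (hz : ContinuousOn z (Set.Icc 0 T))
    (hπz : ContinuousOn πz (Set.Icc 0 T))
    -- quadrature weights and nodes
    (w : Fin L → Fin Qn → ℝ) (tq : Fin L → Fin Qn → ℝ)
    (htq : ∀ ℓ q, tq ℓ q ∈ Set.Icc (0 : ℝ) T)
    (Q : Fin L → ℝ)
    (hQ : ∀ ℓ, Q ℓ = ∑ q, w ℓ q * ⟪G ℓ (tq ℓ q), πz (tq ℓ q)⟫)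
    -- modified Galerkin orthogonality
    (hGal : (∫ t in (0 : ℝ)..T, ⟪X' t, πz t⟫) = ∑ ℓ, b ℓ * Q ℓ) :
    (∫ t in (0 : ℝ)..T, ⟪X' t - g₀ t, z t⟫) =
      (∫ t in (0 : ℝ)..T, ⟪X' t - ∑ ℓ, b ℓ • G ℓ t, z t - πz t⟫)
      + (∫ t in (0 : ℝ)..T, ⟪(∑ ℓ, b ℓ • G ℓ t) - f t, z t⟫)
      + (∑ ℓ, b ℓ * (Q ℓ - ∫ t in (0 : ℝ)..T, ⟪G ℓ t, πz t⟫))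
      + (∫ t in (0 : ℝ)..T, ⟪f t - g₀ t, z t⟫) := by
  have huIcc : Set.uIcc (0:ℝ) T = Set.Icc 0 T := Set.uIcc_of_le hT.le
  -- generic integrability of pairings
  have hint : ∀ (u v : ℝ → EuclideanSpace ℝ (Fin n)),
      ContinuousOn u (Set.Icc 0 T) → ContinuousOn v (Set.Icc 0 T) →
      IntervalIntegrable (fun t => ⟪u t, v t⟫) MeasureTheory.volume 0 T := by
    intro u v hu hv
    apply ContinuousOn.intervalIntegrable
    rw [huIcc]
    exact hu.inner hv
  have hS : ContinuousOn (fun t => ∑ ℓ, b ℓ • G ℓ t) (Set.Icc (0:ℝ) T) := by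
    apply continuousOn_finset_sum
    intro ℓ _
    exact (hG ℓ).const_smul (b ℓ)
  -- split all integrals
  have e1 : (∫ t in (0:ℝ)..T, ⟪X' t - g₀ t, z t⟫)
      = (∫ t in (0:ℝ)..T, ⟪X' t, z t⟫) - ∫ t in (0:ℝ)..T, ⟪g₀ t, z t⟫ := by
    rw [← intervalIntegral.integral_sub (hint _ _ hX' hz) (hint _ _ hg₀ hz)]
    simp [inner_sub_left]
  have e2 : (∫ t in (0:ℝ)..T, ⟪X' t - ∑ ℓ, b ℓ • G ℓ t, z t - πz t⟫)
      = ((∫ t in (0:ℝ)..T, ⟪X' t, z t⟫) - ∫ t in (0:ℝ)..T, ⟪X' t, πz t⟫)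
        - ((∫ t in (0:ℝ)..T, ⟪∑ ℓ, b ℓ • G ℓ t, z t⟫)
          - ∫ t in (0:ℝ)..T, ⟪∑ ℓ, b ℓ • G ℓ t, πz t⟫) := by
    rw [← intervalIntegral.integral_sub (hint _ _ hX' hz) (hint _ _ hX' hπz),
      ← intervalIntegral.integral_sub (hint _ _ hS hz) (hint _ _ hS hπz),
      ← intervalIntegral.integral_sub]
    · congr 1; funext t; simp [inner_sub_left, inner_sub_right]; ring
    · exact (hint _ _ hX' hz).sub (hint _ _ hX' hπz)
    · exact (hint _ _ hS hz).sub (hint _ _ hS hπz)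
  have e3 : (∫ t in (0:ℝ)..T, ⟪(∑ ℓ, b ℓ • G ℓ t) - f t, z t⟫)
      = (∫ t in (0:ℝ)..T, ⟪∑ ℓ, b ℓ • G ℓ t, z t⟫) - ∫ t in (0:ℝ)..T, ⟪f t, z t⟫ := by
    rw [← intervalIntegral.integral_sub (hint _ _ hS hz) (hint _ _ hf hz)]
    simp [inner_sub_left]
  have e4 : (∫ t in (0:ℝ)..T, ⟪f t - g₀ t, z t⟫)
      = (∫ t in (0:ℝ)..T, ⟪f t, z t⟫) - ∫ t in (0:ℝ)..T, ⟪g₀ t, z t⟫ := by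
    rw [← intervalIntegral.integral_sub (hint _ _ hf hz) (hint _ _ hg₀ hz)]
    simp [inner_sub_left]
  have e5 : (∫ t in (0:ℝ)..T, ⟪∑ ℓ, b ℓ • G ℓ t, πz t⟫)
      = ∑ ℓ, b ℓ * ∫ t in (0:ℝ)..T, ⟪G ℓ t, πz t⟫ := by
    have : (∫ t in (0:ℝ)..T, ⟪∑ ℓ, b ℓ • G ℓ t, πz t⟫)
        = ∫ t in (0:ℝ)..T, ∑ ℓ, b ℓ * ⟪G ℓ t, πz t⟫ := by
      congr 1; funext t; simp [inner_smul_left, sum_inner]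
    rw [this, intervalIntegral.integral_finset_sum]
    · congr 1; funext ℓ
      rw [← intervalIntegral.integral_const_mul]
    · intro ℓ _
      exact (hint _ _ (hG ℓ) hπz).const_mul (b ℓ)
  have e6 : (∑ ℓ, b ℓ * (Q ℓ - ∫ t in (0:ℝ)..T, ⟪G ℓ t, πz t⟫))
      = (∫ t in (0:ℝ)..T, ⟪X' t, πz t⟫)
        - ∫ t in (0:ℝ)..T, ⟪∑ ℓ, b ℓ • G ℓ t, πz t⟫ := by
    rw [e5, hGal, ← Finset.sum_sub_distrib]
    congr 1; funext ℓ; ring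
  rw [e1, e2, e3, e4, e6]
  ring
end
end

section
/- With z : [0,T] → ℝⁿ any differentiable solution of the adjoint equation ż(t) = −A(t)ᵀ z(t), the following error representation formula holds: ∫₀ᵀ ⟨F(t, X(t)) − Ẋ(t), z(t)⟩ dt = ⟨e(T), z(T)⟩, i.e. the time-integrated pairing of the negative residual with the adjoint solution equals the inner product of the final-time error with the adjoint final data. -/
open scoped RealInnerProductSpace

noncomputable section

theorem key_mvt {n : ℕ} (F : EuclideanSpace ℝ (Fin n) → EuclideanSpace ℝ (Fin n))
    (hFd : ContDiff ℝ 1 F)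
    (hFc' : Continuous (fun y => fderiv ℝ F y))
    (u v : EuclideanSpace ℝ (Fin n)) :
    (∫ s in (0 : ℝ)..1, fderiv ℝ F (s • u + (1 - s) • v)) (u - v) = F u - F v := by
  have hpath : ∀ s : ℝ, s • u + (1 - s) • v = v + s • (u - v) := by
    intro s; simp [smul_sub, sub_smul]; abel
  have hcont : Continuous (fun s : ℝ => fderiv ℝ F (s • u + (1 - s) • v)) := by
    apply hFc'.comp; fun_prop
  have hint : IntervalIntegrable (fun s : ℝ => fderiv ℝ F (s • u + (1 - s) • v))
      MeasureTheory.volume 0 1 := hcont.intervalIntegrable _ _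
  rw [ContinuousLinearMap.intervalIntegral_apply hint]
  have hderiv : ∀ s ∈ Set.uIcc (0:ℝ) 1,
      HasDerivAt (fun s : ℝ => F (v + s • (u - v)))
        (fderiv ℝ F (s • u + (1 - s) • v) (u - v)) s := by
    intro s _
    have h1 : HasDerivAt (fun s : ℝ => v + s • (u - v)) (u - v) s := by
      simpa using ((hasDerivAt_id s).smul_const (u - v)).const_add v
    have h2 := (hFd.differentiable one_ne_zero (v + s • (u - v))).hasFDerivAt
    rw [hpath s]
    exact h2.comp_hasDerivAt s h1
  have hint2 : IntervalIntegrable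
      (fun s : ℝ => fderiv ℝ F (s • u + (1 - s) • v) (u - v)) MeasureTheory.volume 0 1 := by
    exact (hcont.clm_apply continuous_const).intervalIntegrable _ _
  rw [intervalIntegral.integral_eq_sub_of_hasDerivAt hderiv hint2]
  simp

/-- With `z` any differentiable solution of the adjoint equation
`ż(t) = −A(t)ᵀ z(t)`, where `A(t) = ∫₀¹ D_xF(t, s·x(t) + (1−s)·X(t)) ds` is the
trajectory-averaged Jacobian, the error representation formula holds:
`∫₀ᵀ ⟨F(t, X(t)) − Ẋ(t), z(t)⟩ dt = ⟨e(T), z(T)⟩` with `e = x − X`. -/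
theorem error_representation_formula
    (n : ℕ) (T : ℝ) (hT : 0 < T)
    (F : ℝ → EuclideanSpace ℝ (Fin n) → EuclideanSpace ℝ (Fin n))
    (hFc : Continuous (fun p : ℝ × EuclideanSpace ℝ (Fin n) => F p.1 p.2))
    (hFd : ∀ t, ContDiff ℝ 1 (F t))
    (hFd' : Continuous (fun p : ℝ × EuclideanSpace ℝ (Fin n) => fderiv ℝ (F p.1) p.2))
    (x X X' : ℝ → EuclideanSpace ℝ (Fin n))
    (hx : ∀ t ∈ Set.Icc (0 : ℝ) T, HasDerivAt x (F t (x t)) t)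
    (hX : ∀ t ∈ Set.Icc (0 : ℝ) T, HasDerivAt X (X' t) t)
    (hX' : ContinuousOn X' (Set.Icc 0 T))
    (hX0 : X 0 = x 0)
    (A : ℝ → EuclideanSpace ℝ (Fin n) →L[ℝ] EuclideanSpace ℝ (Fin n))
    (hA : ∀ t, A t = ∫ s in (0 : ℝ)..1, fderiv ℝ (F t) (s • x t + (1 - s) • X t))
    (z : ℝ → EuclideanSpace ℝ (Fin n))
    (hz : ∀ t ∈ Set.Icc (0 : ℝ) T,
      HasDerivAt z (-(ContinuousLinearMap.adjoint (A t)) (z t)) t) :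
    (∫ t in (0 : ℝ)..T, ⟪F t (X t) - X' t, z t⟫) = ⟪x T - X T, z T⟫ := by
  have huIcc : Set.uIcc (0:ℝ) T = Set.Icc 0 T := Set.uIcc_of_le hT.le
  have hAe : ∀ t, (A t) (x t - X t) = F t (x t) - F t (X t) := by
    intro t
    rw [hA t]
    exact key_mvt (F t) (hFd t)
      (by exact hFd'.comp (Continuous.prodMk_right t)) (x t) (X t)
  have hderiv : ∀ t ∈ Set.uIcc (0:ℝ) T,
      HasDerivAt (fun t => ⟪x t - X t, z t⟫) ⟪F t (X t) - X' t, z t⟫ t := by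
    intro t ht
    rw [huIcc] at ht
    have h := HasDerivAt.inner ℝ ((hx t ht).sub (hX t ht)) (hz t ht)
    convert h using 1
    · rfl
    · rfl
    · rfl
    rw [inner_neg_right, ContinuousLinearMap.adjoint_inner_right, Pi.sub_apply, hAe t]
    simp only [inner_sub_left]
    ring
  have hzc : ContinuousOn z (Set.Icc 0 T) :=
    fun t ht => (hz t ht).continuousAt.continuousWithinAt
  have hXc : ContinuousOn X (Set.Icc 0 T) :=
    fun t ht => (hX t ht).continuousAt.continuousWithinAt
  have hFXc : ContinuousOn (fun t => F t (X t)) (Set.Icc 0 T) :=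
    hFc.comp_continuousOn (f := fun t => (t, X t)) (continuousOn_id.prodMk hXc)
  have hint : IntervalIntegrable (fun t => ⟪F t (X t) - X' t, z t⟫)
      MeasureTheory.volume 0 T := by
    apply ContinuousOn.intervalIntegrable
    rw [huIcc]
    exact ContinuousOn.inner (hFXc.sub hX') hzc
  rw [intervalIntegral.integral_eq_sub_of_hasDerivAt hderiv hint]
  have : X 0 - x 0 = 0 := by rw [hX0, sub_self]
  simp [hX0]
end
end

section
/- Let z : [0,T] → ℝⁿ be the differentiable solution of the adjoint equation ż(t) = −A(t)ᵀ z(t) with final data z(T) = e(T). Then ∫₀ᵀ ⟨F(t, X(t)) − Ẋ(t), z(t)⟩ dt = |e(T)|², the squared Euclidean norm of the final-time error. -/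
open scoped RealInnerProductSpace

noncomputable section

/-- With `z` the differentiable solution of the adjoint equation
`ż(t) = −A(t)ᵀ z(t)` with final data `z(T) = e(T)`, where
`A(t) = ∫₀¹ D_xF(t, s·x(t) + (1−s)·X(t)) ds`, we have
`∫₀ᵀ ⟨F(t, X(t)) − Ẋ(t), z(t)⟩ dt = |e(T)|²` with `e = x − X`. -/
theorem error_representation_formula_squared_norm
    (n : ℕ) (T : ℝ) (hT : 0 < T)
    (F : ℝ → EuclideanSpace ℝ (Fin n) → EuclideanSpace ℝ (Fin n))
    (hFc : Continuous (fun p : ℝ × EuclideanSpace ℝ (Fin n) => F p.1 p.2))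
    (hFd : ∀ t, ContDiff ℝ 1 (F t))
    (hFd' : Continuous (fun p : ℝ × EuclideanSpace ℝ (Fin n) => fderiv ℝ (F p.1) p.2))
    (x X X' : ℝ → EuclideanSpace ℝ (Fin n))
    (hx : ∀ t ∈ Set.Icc (0 : ℝ) T, HasDerivAt x (F t (x t)) t)
    (hX : ∀ t ∈ Set.Icc (0 : ℝ) T, HasDerivAt X (X' t) t)
    (hX' : ContinuousOn X' (Set.Icc 0 T))
    (hX0 : X 0 = x 0)
    (A : ℝ → EuclideanSpace ℝ (Fin n) →L[ℝ] EuclideanSpace ℝ (Fin n))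
    (hA : ∀ t, A t = ∫ s in (0 : ℝ)..1, fderiv ℝ (F t) (s • x t + (1 - s) • X t))
    (z : ℝ → EuclideanSpace ℝ (Fin n))
    (hz : ∀ t ∈ Set.Icc (0 : ℝ) T,
      HasDerivAt z (-(ContinuousLinearMap.adjoint (A t)) (z t)) t)
    (hzT : z T = x T - X T) :
    (∫ t in (0 : ℝ)..T, ⟪F t (X t) - X' t, z t⟫) = ‖x T - X T‖ ^ 2 := by
  have huIcc : Set.uIcc (0 : ℝ) T = Set.Icc 0 T := Set.uIcc_of_le hT.le
  -- continuity of solutions on Icc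
  have hxc : ContinuousOn x (Set.Icc 0 T) := fun t ht =>
    (hx t ht).continuousAt.continuousWithinAt
  have hXc : ContinuousOn X (Set.Icc 0 T) := fun t ht =>
    (hX t ht).continuousAt.continuousWithinAt
  have hzc : ContinuousOn z (Set.Icc 0 T) := fun t ht =>
    (hz t ht).continuousAt.continuousWithinAt
  -- key identity : A t (x t - X t) = F t (x t) - F t (X t)
  have key : ∀ t : ℝ, (A t) (x t - X t) = F t (x t) - F t (X t) := by
    intro t
    set c := x t - X t with hc
    have hpath : ∀ s : ℝ, s • x t + (1 - s) • X t = X t + s • c := by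
      intro s
      rw [hc, sub_smul, one_smul, smul_sub]
      abel
    have hg : ∀ s : ℝ, HasDerivAt (fun s : ℝ => F t (X t + s • c))
        ((fderiv ℝ (F t) (X t + s • c)) c) s := by
      intro s
      have h1 : HasFDerivAt (F t) (fderiv ℝ (F t) (X t + s • c)) (X t + s • c) :=
        ((hFd t).differentiable one_ne_zero _).hasFDerivAt
      have h2 : HasDerivAt (fun s : ℝ => X t + s • c) c s := by
        simpa using ((hasDerivAt_id s).smul_const c).const_add (X t)
      exact h1.comp_hasDerivAt s h2
    have hcontL : Continuous (fun s : ℝ => fderiv ℝ (F t) (X t + s • c)) := by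
      have : Continuous (fun s : ℝ => ((t, X t + s • c) :
          ℝ × EuclideanSpace ℝ (Fin n))) := by fun_prop
      exact hFd'.comp this
    have hint : IntervalIntegrable (fun s : ℝ => fderiv ℝ (F t) (X t + s • c))
        MeasureTheory.volume 0 1 := hcontL.intervalIntegrable 0 1
    have hAt : A t = ∫ s in (0:ℝ)..1, fderiv ℝ (F t) (X t + s • c) := by
      rw [hA t]
      congr 1
      ext s
      rw [hpath s]
    have hftc : (∫ s in (0:ℝ)..1, (fderiv ℝ (F t) (X t + s • c)) c)
        = F t (x t) - F t (X t) := by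
      have := intervalIntegral.integral_eq_sub_of_hasDerivAt
        (f := fun s : ℝ => F t (X t + s • c))
        (f' := fun s : ℝ => (fderiv ℝ (F t) (X t + s • c)) c)
        (a := 0) (b := 1) (fun s _ => hg s)
        ((hcontL.clm_apply continuous_const).intervalIntegrable 0 1)
      rw [this]
      simp [hc]
    rw [hAt, ContinuousLinearMap.intervalIntegral_apply hint, hftc]
  -- derivative of ⟪e, z⟫
  have hderiv : ∀ t ∈ Set.Icc (0 : ℝ) T,
      HasDerivAt (fun t => ⟪x t - X t, z t⟫) (⟪F t (X t) - X' t, z t⟫) t := by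
    intro t ht
    have he : HasDerivAt (fun t => x t - X t) (F t (x t) - X' t) t :=
      (hx t ht).sub (hX t ht)
    have h := he.inner ℝ (hz t ht)
    have hval : ⟪x t - X t, -(ContinuousLinearMap.adjoint (A t)) (z t)⟫
        + ⟪F t (x t) - X' t, z t⟫ = ⟪F t (X t) - X' t, z t⟫ := by
      have h1 : ⟪x t - X t, (ContinuousLinearMap.adjoint (A t)) (z t)⟫
          = ⟪F t (x t) - F t (X t), z t⟫ := by
        rw [real_inner_comm, ContinuousLinearMap.adjoint_inner_left, key t,
          real_inner_comm]
      rw [inner_neg_right, h1]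
      rw [show F t (X t) - X' t = -(F t (x t) - F t (X t)) + (F t (x t) - X' t) by abel]
      rw [inner_add_left, inner_neg_left]
    rw [← hval]
    exact h
  -- continuity of integrand
  have hintg : ContinuousOn (fun t => ⟪F t (X t) - X' t, z t⟫) (Set.Icc 0 T) := by
    have h1 : ContinuousOn (fun t => F t (X t)) (Set.Icc 0 T) :=
      hFc.comp_continuousOn (f := fun t => (t, X t)) (s := Set.Icc 0 T) (continuousOn_id.prodMk hXc)
    exact ((h1.sub hX').inner hzc)
  -- integrate
  have hFTC := intervalIntegral.integral_eq_sub_of_hasDerivAt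
    (f := fun t => ⟪x t - X t, z t⟫)
    (f' := fun t => ⟪F t (X t) - X' t, z t⟫) (a := 0) (b := T)
    (fun t ht => hderiv t (huIcc ▸ ht))
    ((hintg.mono (le_of_eq huIcc)).intervalIntegrable)
  rw [hFTC]
  show ⟪x T - X T, z T⟫ - ⟪x 0 - X 0, z 0⟫ = _
  rw [hzT, hX0, sub_self, inner_zero_left, sub_zero, real_inner_self_eq_norm_sq]
end
end

section
/- Let z : [0,T] → ℝⁿ be the differentiable solution of the adjoint equation ż(t) = −A(t)ᵀ z(t) with final data z(T) = e(T), and let πz : [0,T] → ℝⁿ be any integrable function satisfying the Galerkin orthogonality condition ∫₀ᵀ ⟨F(t, X(t)) − Ẋ(t), πz(t)⟩ dt = 0. Then ∫₀ᵀ ⟨F(t, X(t)) − Ẋ(t), z(t) − πz(t)⟩ dt = |e(T)|². -/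
open scoped RealInnerProductSpace

noncomputable section

set_option maxHeartbeats 1000000 in
/-- With `z` the differentiable solution of the adjoint equation
`ż(t) = −A(t)ᵀ z(t)`, `z(T) = e(T)`, and `πz` any integrable function satisfying the
Galerkin orthogonality `∫₀ᵀ ⟨F(t, X(t)) − Ẋ(t), πz(t)⟩ dt = 0`, we have
`∫₀ᵀ ⟨F(t, X(t)) − Ẋ(t), z(t) − πz(t)⟩ dt = |e(T)|²` with `e = x − X`. -/
theorem error_representation_formula_galerkin
    (n : ℕ) (T : ℝ) (hT : 0 < T)
    (F : ℝ → EuclideanSpace ℝ (Fin n) → EuclideanSpace ℝ (Fin n))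
    (hFc : Continuous (fun p : ℝ × EuclideanSpace ℝ (Fin n) => F p.1 p.2))
    (hFd : ∀ t, ContDiff ℝ 1 (F t))
    (hFd' : Continuous (fun p : ℝ × EuclideanSpace ℝ (Fin n) => fderiv ℝ (F p.1) p.2))
    (x X X' : ℝ → EuclideanSpace ℝ (Fin n))
    (hx : ∀ t ∈ Set.Icc (0 : ℝ) T, HasDerivAt x (F t (x t)) t)
    (hX : ∀ t ∈ Set.Icc (0 : ℝ) T, HasDerivAt X (X' t) t)
    (hX' : ContinuousOn X' (Set.Icc 0 T))
    (hX0 : X 0 = x 0)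
    (A : ℝ → EuclideanSpace ℝ (Fin n) →L[ℝ] EuclideanSpace ℝ (Fin n))
    (hA : ∀ t, A t = ∫ s in (0 : ℝ)..1, fderiv ℝ (F t) (s • x t + (1 - s) • X t))
    (z : ℝ → EuclideanSpace ℝ (Fin n))
    (hz : ∀ t ∈ Set.Icc (0 : ℝ) T,
      HasDerivAt z (-(ContinuousLinearMap.adjoint (A t)) (z t)) t)
    (hzT : z T = x T - X T)
    (πz : ℝ → EuclideanSpace ℝ (Fin n))
    (hπzInt : IntervalIntegrable (fun t => ⟪F t (X t) - X' t, πz t⟫)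
      MeasureTheory.volume 0 T)
    (hGal : (∫ t in (0 : ℝ)..T, ⟪F t (X t) - X' t, πz t⟫) = 0) :
    (∫ t in (0 : ℝ)..T, ⟪F t (X t) - X' t, z t - πz t⟫) = ‖x T - X T‖ ^ 2 := by
  have hIcc : Set.uIcc (0 : ℝ) T = Set.Icc 0 T := Set.uIcc_of_le hT.le
  -- Key pointwise identity: A t (x t - X t) = F t (x t) - F t (X t)
  have hAe : ∀ t, A t (x t - X t) = F t (x t) - F t (X t) := by
    intro t
    set γ : ℝ → EuclideanSpace ℝ (Fin n) := fun s => s • x t + (1 - s) • X t with hγ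
    have hγc : Continuous γ := by continuity
    have hcont : Continuous fun s : ℝ => fderiv ℝ (F t) (γ s) := by
      have := hFd'.comp (Continuous.prodMk_right t |>.comp hγc)
      exact this
    have hInt : IntervalIntegrable (fun s : ℝ => fderiv ℝ (F t) (γ s))
        MeasureTheory.volume 0 1 := hcont.intervalIntegrable 0 1
    have h1 : A t (x t - X t)
        = ∫ s in (0:ℝ)..1, fderiv ℝ (F t) (γ s) (x t - X t) := by
      rw [hA t]
      exact ContinuousLinearMap.intervalIntegral_apply hInt _
    have hderiv : ∀ s ∈ Set.uIcc (0:ℝ) 1,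
        HasDerivAt (fun s => F t (γ s)) (fderiv ℝ (F t) (γ s) (x t - X t)) s := by
      intro s _
      have hγd : HasDerivAt γ (x t - X t) s := by
        have h1 : HasDerivAt (fun s : ℝ => s • x t) ((1:ℝ) • x t) s :=
          (hasDerivAt_id s).smul_const (x t)
        have h2 : HasDerivAt (fun s : ℝ => (1 - s) • X t) ((-1:ℝ) • X t) s := by
          have : HasDerivAt (fun s : ℝ => 1 - s) (-1) s := by
            simpa using (hasDerivAt_id s).const_sub 1
          exact this.smul_const (X t)
        have := h1.add h2
        rw [show x t - X t = (1:ℝ) • x t + (-1:ℝ) • X t by simp [sub_eq_add_neg]]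
        exact this
      have hF : HasFDerivAt (F t) (fderiv ℝ (F t) (γ s)) (γ s) :=
        ((hFd t).differentiable one_ne_zero (γ s)).hasFDerivAt
      exact hF.comp_hasDerivAt s hγd
    have h2 : (∫ s in (0:ℝ)..1, fderiv ℝ (F t) (γ s) (x t - X t))
        = F t (γ 1) - F t (γ 0) := by
      apply intervalIntegral.integral_eq_sub_of_hasDerivAt hderiv
      exact ((hcont.clm_apply continuous_const).intervalIntegrable 0 1)
    have hγ1 : γ 1 = x t := by simp [hγ]
    have hγ0 : γ 0 = X t := by simp [hγ]
    rw [h1, h2, hγ1, hγ0]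
  -- continuity of z and X on [0,T]
  have hzc : ContinuousOn z (Set.Icc 0 T) := fun t ht =>
    (hz t ht).continuousAt.continuousWithinAt
  have hXc : ContinuousOn X (Set.Icc 0 T) := fun t ht =>
    (hX t ht).continuousAt.continuousWithinAt
  -- the main integrand with z is continuous on [0,T]
  have hFXc : ContinuousOn (fun t => F t (X t)) (Set.Icc 0 T) := by
    have : ContinuousOn (fun t : ℝ => (t, X t)) (Set.Icc 0 T) :=
      (continuousOn_id).prodMk hXc
    exact hFc.comp_continuousOn this
  have hcontMain : ContinuousOn (fun t => ⟪F t (X t) - X' t, z t⟫) (Set.Icc 0 T) :=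
    (hFXc.sub hX').inner hzc
  have hIntMain : IntervalIntegrable (fun t => ⟪F t (X t) - X' t, z t⟫)
      MeasureTheory.volume 0 T := by
    apply ContinuousOn.intervalIntegrable
    rwa [hIcc]
  -- derivative of g t = ⟪x t - X t, z t⟫
  have hg : ∀ t ∈ Set.uIcc (0:ℝ) T,
      HasDerivAt (fun t => ⟪x t - X t, z t⟫) (⟪F t (X t) - X' t, z t⟫) t := by
    intro t ht
    rw [hIcc] at ht
    have he : HasDerivAt (fun t => x t - X t) (F t (x t) - X' t) t :=
      (hx t ht).sub (hX t ht)
    have := he.inner ℝ (hz t ht)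
    have key : ⟪x t - X t, -(ContinuousLinearMap.adjoint (A t)) (z t)⟫
        + ⟪F t (x t) - X' t, z t⟫
        = ⟪F t (X t) - X' t, z t⟫ := by
      have hadj : ⟪x t - X t, (ContinuousLinearMap.adjoint (A t)) (z t)⟫
          = ⟪A t (x t - X t), z t⟫ :=
        ContinuousLinearMap.adjoint_inner_right (A t) _ _
      rw [inner_neg_right, hadj, hAe t]
      simp only [inner_sub_left]
      ring
    rw [← key]
    exact this
  -- FTC
  have hFTC : (∫ t in (0:ℝ)..T, ⟪F t (X t) - X' t, z t⟫)
      = ⟪x T - X T, z T⟫ - ⟪x 0 - X 0, z 0⟫ :=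
    intervalIntegral.integral_eq_sub_of_hasDerivAt hg hIntMain
  have hzero : ⟪x 0 - X 0, z 0⟫ = (0:ℝ) := by
    rw [hX0]; simp
  have hMain : (∫ t in (0:ℝ)..T, ⟪F t (X t) - X' t, z t⟫) = ‖x T - X T‖ ^ 2 := by
    rw [hFTC, hzero, hzT, sub_zero, real_inner_self_eq_norm_sq]
  calc (∫ t in (0:ℝ)..T, ⟪F t (X t) - X' t, z t - πz t⟫)
      = ∫ t in (0:ℝ)..T, (⟪F t (X t) - X' t, z t⟫ - ⟪F t (X t) - X' t, πz t⟫) := by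
        simp_rw [inner_sub_right]
    _ = (∫ t in (0:ℝ)..T, ⟪F t (X t) - X' t, z t⟫)
        - ∫ t in (0:ℝ)..T, ⟪F t (X t) - X' t, πz t⟫ :=
        intervalIntegral.integral_sub hIntMain hπzInt
    _ = ‖x T - X T‖ ^ 2 := by rw [hMain, hGal, sub_zero]
end
end
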